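/- Let x be a sequence of length m with distinct elements, i ∈ {1,...,m-1} with x[i] < x[i+1], and y = τ(x,i) the sequence obtained by swapping positions i and i+1. Then PD_y[i+1] = 0 if PD_x[i] = 0, and PD_y[i+1] = PD_x[i] + 1 otherwise. -/

import Mathlib

/-- Binary tree shapes (Cartesian trees are determined by their shape). -/
inductive BTree : Type
  | nil : BTree
  | node : BTree → BTree → BTree
deriving DecidableEq

namespace BTree

/-- Number of nodes. -/
def size : BTree → ℕ
  | nil => 0
  | node l r => size l + size r + 1

/-- Length of the leftmost path. -/
def LMP : BTree → ℕ
  | nil => 0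
  | node l _ => LMP l + 1

/-- Length of the rightmost path. -/
def RMP : BTree → ℕ
  | nil => 0
  | node _ r => RMP r + 1

end BTree

/-- Minimum value of a list (0 for the empty list). -/
def listMin : List ℤ → ℤ
  | [] => 0
  | a :: t => t.foldl min a

/-- Index (0-based) of the minimum of a list. -/
def minIdx (l : List ℤ) : ℕ := l.idxOf (listMin l)

/-- Cartesian tree of a list, with fuel for termination. -/
def ctreeAux : ℕ → List ℤ → BTree
  | 0, _ => .nil
  | _ + 1, [] => .nil
  | n + 1, a :: t =>
      let g := minIdx (a :: t)
      .node (ctreeAux n ((a :: t).take g)) (ctreeAux n ((a :: t).drop (g + 1)))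

/-- Cartesian tree of a list: the root is the position of the minimum,
its subtrees are the Cartesian trees of the prefix and suffix around it. -/
def ctreeL (l : List ℤ) : BTree := ctreeAux l.length l

/-- The factor x[a..b] (1-based positions) of a sequence, as a list. -/
def seqList (x : ℕ → ℤ) (a b : ℕ) : List ℤ :=
  (List.range (b + 1 - a)).map (fun k => x (a + k))

/-- Cartesian tree of the sequence x[1..m]. -/
def ctreeOf (m : ℕ) (x : ℕ → ℤ) : BTree := ctreeL (seqList x 1 m)

/-- Positions j < h (1-based) with x[j] < x[h]. -/
def PDset (x : ℕ → ℤ) (h : ℕ) : Finset ℕ :=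
  (Finset.Ico 1 h).filter (fun j => x j < x h)

/-- Parent-distance table: PD_x[h] = h - max{j < h : x[j] < x[h]}, 0 if no such j. -/
def PD (x : ℕ → ℤ) (h : ℕ) : ℕ :=
  if hs : (PDset x h).Nonempty then h - (PDset x h).max' hs else 0

/-- Positions h < j ≤ m with x[j] < x[h]. -/
def RPDset (m : ℕ) (x : ℕ → ℤ) (h : ℕ) : Finset ℕ :=
  (Finset.Ioc h m).filter (fun j => x j < x h)

/-- Reverse parent-distance table: RPD_x[h] = min{j > h : x[j] < x[h]} - h, 0 if no such j. -/
def RPD (m : ℕ) (x : ℕ → ℤ) (h : ℕ) : ℕ :=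
  if hs : (RPDset m x h).Nonempty then (RPDset m x h).min' hs - h else 0

/-- Referent of h: the smallest position j > h with x[j] < x[h], or -1 if none. -/
def refD (m : ℕ) (x : ℕ → ℤ) (h : ℕ) : ℤ :=
  if hs : (RPDset m x h).Nonempty then ((RPDset m x h).min' hs : ℤ) else -1

/-- Skipped-number table: SN_x[h] is the number of nodes on the rightmost path of the
left subtree of node h in C(x), i.e. the number of positions whose referent is h. -/
def SN (m : ℕ) (x : ℕ → ℤ) (h : ℕ) : ℕ :=
  ((Finset.Ico 1 h).filter (fun j => refD m x j = (h : ℤ))).card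

/-- The swap τ(x,i): exchange the entries at positions i and i+1. -/
def swapAt (x : ℕ → ℤ) (i : ℕ) : ℕ → ℤ :=
  fun j => if j = i then x (i + 1) else if j = i + 1 then x i else x j

/-- ng(T,i): the Cartesian trees obtained from a sequence realizing T by one swap
at position i (valid positions are 1 ≤ i ≤ m-1). -/
def ngi (m : ℕ) (T : BTree) (i : ℕ) : Set BTree :=
  { S | 1 ≤ i ∧ i + 1 ≤ m ∧ ∃ x : ℕ → ℤ, Set.InjOn x (Set.Icc 1 m) ∧
        ctreeOf m x = T ∧ S = ctreeOf m (swapAt x i) }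

/-- ng(T): the swap neighbourhood of T. -/
def ng (m : ℕ) (T : BTree) : Set BTree := ⋃ i, ngi m T i

/-- Number of permutations of {1,...,n} whose Cartesian tree is A. -/
noncomputable def permCount (n : ℕ) (A : BTree) : ℕ :=
  Set.ncard { σ : Equiv.Perm (Fin n) |
    ctreeL (List.ofFn (fun k : Fin n => ((σ k : ℕ) : ℤ) + 1)) = A }

/-- Product over all nodes t of A of the size of the subtree rooted at t. -/
def hookProd : BTree → ℕ
  | .nil => 1
  | .node l r => (BTree.node l r).size * hookProd l * hookProd r


theorem stmt2 (m i : ℕ) (x : ℕ → ℤ) (hx : Set.InjOn x (Set.Icc 1 m))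
    (hi1 : 1 ≤ i) (him : i + 1 ≤ m) (hlt : x i < x (i + 1)) :
    PD (swapAt x i) (i + 1) = if PD x i = 0 then 0 else PD x i + 1 := by
  have hy1 : swapAt x i (i + 1) = x i := by simp [swapAt]
  have hset : PDset (swapAt x i) (i + 1) = PDset x i := by
    ext j
    simp only [PDset, Finset.mem_filter, Finset.mem_Ico, hy1]
    constructor
    · rintro ⟨⟨h1, h2⟩, hv⟩
      have hji1 : j ≠ i + 1 := by omega
      by_cases hji : j = i
      · rw [hji] at hv; simp [swapAt] at hv; omega
      · refine ⟨⟨h1, by omega⟩, ?_⟩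
        simpa [swapAt, hji, hji1] using hv
    · rintro ⟨⟨h1, h2⟩, hv⟩
      have hji : j ≠ i := by omega
      have hji1 : j ≠ i + 1 := by omega
      refine ⟨⟨h1, by omega⟩, ?_⟩
      simpa [swapAt, hji, hji1] using hv
  by_cases hne : (PDset x i).Nonempty
  · have hM := (PDset x i).max'_mem hne
    have hMlt : (PDset x i).max' hne < i := (Finset.mem_Ico.mp (Finset.mem_filter.mp hM).1).2
    have hM1 : 1 ≤ (PDset x i).max' hne := (Finset.mem_Ico.mp (Finset.mem_filter.mp hM).1).1
    have hpd : PD x i = i - (PDset x i).max' hne := by rw [PD, dif_pos hne]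
    have hpdne : PD x i ≠ 0 := by omega
    rw [if_neg hpdne]
    have hne' : (PDset (swapAt x i) (i + 1)).Nonempty := by rw [hset]; exact hne
    rw [PD, dif_pos hne']
    have : (PDset (swapAt x i) (i + 1)).max' hne' = (PDset x i).max' hne := by congr 1
    omega
  · have h1 : PD x i = 0 := by rw [PD, dif_neg hne]
    have hne' : ¬ (PDset (swapAt x i) (i + 1)).Nonempty := by rw [hset]; exact hne
    rw [if_pos h1, PD, dif_neg hne']
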